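/- Let q be a prime power, n a positive integer, and for i = 1, ..., n let S_i ⊆ F_q^* with 0 < |S_i| < q-1, not all |S_i| equal to q-2. Set T_i = F_q^* \ S_i, t_i = |T_i|, and m = \prod_{i=1}^n t_i. Let P(X_1,...,X_n) = \prod_{i=1}^n \prod_{x ∈ S_i}(X_i - x). If there exists (k_1, ..., k_n) with 0 < k_i < q-1 for all i such that the support of the reduction of X_1^{k_1} ··· X_n^{k_n} P modulo {X_1^{q-1} - 1, ..., X_n^{q-1} - 1} is disjoint from U(q, m-1, n), then for every i = 1, ..., n the set T_i is contained in the coset γ_i H_i, where H_i = { β ∈ F_q^* : β^{k_i} = 1 } is a proper multiplicative subgroup of F_q^* and γ_i is any element of T_i. -/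

import Mathlib

/-- Reduction of an exponent vector modulo `q-1` in each coordinate. -/
noncomputable def reduceExp (q : ℕ) {n : ℕ} (e : Fin n →₀ ℕ) : Fin n →₀ ℕ :=
  Finsupp.mapRange (· % (q - 1)) (Nat.zero_mod _) e

/-- Reduction of a polynomial modulo `{X_1^{q-1} - 1, …, X_n^{q-1} - 1}`: each exponent of
each variable is replaced by its residue modulo `q-1`. -/
noncomputable def reduceMod {F : Type*} [Field F] (q : ℕ) {n : ℕ}
    (Q : MvPolynomial (Fin n) F) : MvPolynomial (Fin n) F :=
  Q.support.sum fun e => MvPolynomial.monomial (reduceExp q e) (Q.coeff e)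

/-- The exponent vector `e` belongs to the set `U(q,m,n)`, i.e. the monomial
`X_1^{e_1} ⋯ X_n^{e_n}` lies in `M(q,n)` and `∏_{s=1}^n (q-1-e_s) ≤ m`. -/
def inU (q m : ℕ) {n : ℕ} (e : Fin n →₀ ℕ) : Prop :=
  (∀ i, e i < q - 1) ∧ ∏ s : Fin n, (q - 1 - e s) ≤ m
section UniAux
open Polynomial

theorem prod_nonzero_X_sub_C (F : Type*) [Field F] [Fintype F] [DecidableEq F] :
    ∏ x ∈ Finset.univ.filter (· ≠ (0 : F)), (X - C x) = X ^ (Fintype.card F - 1) - 1 := by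
  have hcard : 1 < Fintype.card F := Fintype.one_lt_card
  have hm : (X ^ Fintype.card F - X : F[X]).Monic := by
    apply Polynomial.monic_X_pow_sub
    rw [degree_X]; exact_mod_cast hcard
  have hdeg : (X ^ Fintype.card F - X : F[X]).natDegree = Fintype.card F :=
    FiniteField.X_pow_card_sub_X_natDegree_eq F hcard
  have hsplit : Splits (X ^ Fintype.card F - X : F[X]) := by
    rw [splits_iff_card_roots, FiniteField.roots_X_pow_card_sub_X, hdeg]
    simp [Finset.card_univ]
  have h1 : (X ^ Fintype.card F - X : F[X]) = ∏ a : F, (X - C a) := by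
    conv_lhs => rw [hsplit.eq_prod_roots_of_monic hm]
    rw [FiniteField.roots_X_pow_card_sub_X, Finset.prod_eq_multiset_prod]
  have h2 : ((X : F[X]) - C (0:F)) * ∏ x ∈ (Finset.univ : Finset F).erase (0:F), (X - C x)
      = ∏ a : F, (X - C a) :=
    Finset.mul_prod_erase _ (fun x => X - C x) (Finset.mem_univ (0:F))
  have h3 : (X : F[X]) * ∏ x ∈ Finset.univ.filter (· ≠ (0 : F)), (X - C x)
      = X * (X ^ (Fintype.card F - 1) - 1) := by
    rw [Finset.filter_ne']
    rw [map_zero, sub_zero] at h2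
    rw [h2, ← h1, mul_sub, mul_one, ← pow_succ']
    congr 2
    omega
  exact mul_left_cancel₀ X_ne_zero h3

theorem uni_key {F : Type*} [Field F] [Fintype F] [DecidableEq F] {q : ℕ}
    (hq : Fintype.card F = q) (S : Finset F) (hS0 : (0:F) ∉ S) (hs : S.card < q - 1)
    {k : ℕ} (hk0 : 0 < k) :
    ∃ D j, D < ((Finset.univ.filter (· ≠ (0:F))) \ S).card ∧
      j ∈ (X ^ k * ∏ x ∈ S, (X - C x) : F[X]).support ∧
      j % (q-1) = S.card + D ∧
      (∀ j' ∈ (X ^ k * ∏ x ∈ S, (X - C x) : F[X]).support, j' % (q-1) = S.card + D → j' = j) ∧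
      (D = 0 → ∀ α ∈ (Finset.univ.filter (· ≠ (0:F))) \ S,
        ∀ β ∈ (Finset.univ.filter (· ≠ (0:F))) \ S, α ^ k = β ^ k) := by
  have hq2 : 1 < q := hq ▸ Fintype.one_lt_card
  set ρ := q - 1 with hρdef
  have hρ : 0 < ρ := by omega
  set T : Finset F := (Finset.univ.filter (· ≠ (0:F))) \ S with hTdef
  set s := S.card with hsdef
  have hSsub : S ⊆ Finset.univ.filter (· ≠ (0:F)) := by
    intro x hx
    simp only [Finset.mem_filter, Finset.mem_univ, true_and]
    rintro rfl; exact hS0 hx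
  have hfcard : (Finset.univ.filter (· ≠ (0:F))).card = q - 1 := by
    rw [Finset.filter_ne', Finset.card_erase_of_mem (Finset.mem_univ _), Finset.card_univ, hq]
  have hTcard : T.card = ρ - s := by
    rw [hTdef, Finset.card_sdiff_of_subset hSsub, hfcard]
  have htpos : 0 < T.card := by omega
  have hTne : ∀ α ∈ T, α ≠ 0 := by
    intro α hα
    have := (Finset.mem_sdiff.1 hα).1
    simpa using (Finset.mem_filter.1 this).2
  set Qp : F[X] := ∏ x ∈ T, (X - C x) with hQpdef
  set Pp : F[X] := ∏ x ∈ S, (X - C x) with hPpdef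
  have monQp : Qp.Monic := monic_prod_of_monic _ _ (fun x _ => monic_X_sub_C x)
  have monPp : Pp.Monic := monic_prod_of_monic _ _ (fun x _ => monic_X_sub_C x)
  have degQp : Qp.natDegree = T.card := by
    rw [hQpdef, natDegree_prod _ _ (fun x _ => X_sub_C_ne_zero x)]
    simp
  have degPp : Pp.natDegree = s := by
    rw [hPpdef, natDegree_prod _ _ (fun x _ => X_sub_C_ne_zero x)]
    simp [hsdef]
  have hPQ : Qp * Pp = X ^ ρ - 1 := by
    rw [hQpdef, hPpdef, Finset.prod_sdiff hSsub, prod_nonzero_X_sub_C, hq]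
  set w : F[X] := X ^ k %ₘ Qp with hwdef
  have hwdiv : w + Qp * (X ^ k /ₘ Qp) = X ^ k := modByMonic_add_div _ Qp
  have hQeval : ∀ α ∈ T, Qp.eval α = 0 := by
    intro α hα
    rw [hQpdef, eval_prod]
    exact Finset.prod_eq_zero hα (by simp)
  have hweval : ∀ α ∈ T, w.eval α = α ^ k := by
    intro α hα
    have := congrArg (eval α) hwdiv
    simpa [hQeval α hα] using this
  obtain ⟨α₀, hα₀⟩ := Finset.card_pos.1 htpos
  have hw0 : w ≠ 0 := by
    intro h
    have hα₀k : α₀ ^ k = 0 := by rw [← hweval α₀ hα₀, h, eval_zero]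
    have : α₀ = 0 := pow_eq_zero_iff hk0.ne' |>.1 hα₀k
    exact hTne α₀ hα₀ this
  have hdegw : w.natDegree < T.card := by
    rw [← degQp]
    exact natDegree_lt_natDegree hw0 (degree_modByMonic_lt _ monQp)
  set D := w.natDegree with hDdef
  set r : F[X] := Pp * w with hrdef
  have hr0 : r ≠ 0 := mul_ne_zero monPp.ne_zero hw0
  have hdegr : r.natDegree = s + D := by
    rw [hrdef, natDegree_mul monPp.ne_zero hw0, degPp]
  set p : F[X] := X ^ k * Pp with hpdef
  have hp0 : p ≠ 0 := mul_ne_zero (pow_ne_zero _ X_ne_zero) monPp.ne_zero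
  have hdegp : p.natDegree = k + s := by
    rw [hpdef, natDegree_mul (pow_ne_zero _ X_ne_zero) monPp.ne_zero, natDegree_X_pow, degPp]
  have hsupp : ∀ j ∈ p.support, k ≤ j ∧ j ≤ k + s := by
    intro j hj
    constructor
    · by_contra hlt
      push_neg at hlt
      have : p.coeff j = 0 := X_pow_dvd_iff.1 (dvd_mul_right _ _) j hlt
      exact (mem_support_iff.1 hj) this
    · exact hdegp ▸ le_natDegree_of_ne_zero (mem_support_iff.1 hj)
  set ured : F[X] := ∑ j ∈ p.support, (monomial (j % ρ)) (p.coeff j) with hureddef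
  have hα : α₀ ≠ 0 := hTne α₀ hα₀
  have hdvd1 : (X ^ ρ - 1 : F[X]) ∣ p - ured := by
    have hpsum : p - ured
        = ∑ j ∈ p.support, ((monomial j) (p.coeff j) - (monomial (j % ρ)) (p.coeff j)) := by
      rw [Finset.sum_sub_distrib, hureddef]
      congr 1
      exact as_sum_support p
    rw [hpsum]
    apply Finset.dvd_sum
    intro j hj
    have key : (monomial j) (p.coeff j) - (monomial (j % ρ)) (p.coeff j)
        = (monomial (j % ρ)) (p.coeff j) * (X ^ (ρ * (j / ρ)) - 1) := by
      rw [mul_sub, mul_one, X_pow_eq_monomial, monomial_mul_monomial, mul_one,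
        Nat.mod_add_div]
    rw [key]
    apply Dvd.dvd.mul_left
    rw [pow_mul]
    simpa using sub_dvd_pow_sub_pow (X ^ ρ : F[X]) 1 (j / ρ)
  have hdvd2 : (X ^ ρ - 1 : F[X]) ∣ p - r := by
    refine ⟨X ^ k /ₘ Qp, ?_⟩
    rw [← hPQ, hpdef, hrdef]
    linear_combination (Pp : F[X]) * hwdiv.symm
  have hured : ured = r := by
    have hsub : (X ^ ρ - 1 : F[X]) ∣ r - ured := by
      have := dvd_sub hdvd1 hdvd2
      simpa using this
    have hdegr' : r.degree < (ρ : WithBot ℕ) := by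
      apply lt_of_le_of_lt (degree_le_natDegree)
      rw [hdegr]
      exact_mod_cast (by omega : s + D < ρ)
    have hdegu : ured.degree < (ρ : WithBot ℕ) := by
      apply lt_of_le_of_lt (degree_sum_le _ _)
      rw [Finset.sup_lt_iff (by exact_mod_cast WithBot.bot_lt_coe ρ)]
      intro j hj
      apply lt_of_le_of_lt (degree_monomial_le _ _)
      exact_mod_cast Nat.mod_lt j hρ
    have hzero : r - ured = 0 := by
      apply eq_zero_of_dvd_of_degree_lt hsub
      rw [(by simp : (1 : F[X]) = C 1), degree_X_pow_sub_C hρ]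
      exact lt_of_le_of_lt (degree_sub_le _ _) (max_lt hdegr' hdegu)
    exact (sub_eq_zero.1 hzero).symm
  have hlead : r.coeff (s + D) ≠ 0 := by
    have h1 := leadingCoeff_ne_zero.mpr hr0
    rw [Polynomial.leadingCoeff, hdegr] at h1
    exact h1
  have hex : ∃ j ∈ p.support, j % ρ = s + D := by
    by_contra hcon
    push_neg at hcon
    have h0 : ured.coeff (s + D) = 0 := by
      rw [hureddef, finset_sum_coeff]
      apply Finset.sum_eq_zero
      intro j hj
      rw [coeff_monomial, if_neg (hcon j hj)]
    rw [hured] at h0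
    exact hlead h0
  obtain ⟨jj, hjsupp, hjmod⟩ := hex
  refine ⟨D, jj, by omega, hjsupp, hjmod, ?_, ?_⟩
  · intro j' hj' hj'mod
    have h1 := hsupp _ hjsupp
    have h2 := hsupp _ hj'
    have hme : j' % ρ = jj % ρ := by rw [hjmod, hj'mod]
    rcases le_total j' jj with hle | hle
    · have hdvd : ρ ∣ jj - j' := (Nat.modEq_iff_dvd' hle).1 hme
      rcases Nat.eq_zero_or_pos (jj - j') with h | h
      · omega
      · have := Nat.le_of_dvd h hdvd
        omega
    · have hdvd : ρ ∣ j' - jj := (Nat.modEq_iff_dvd' hle).1 hme.symm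
      rcases Nat.eq_zero_or_pos (j' - jj) with h | h
      · omega
      · have := Nat.le_of_dvd h hdvd
        omega
  · intro hD0 α hαT β hβT
    have hwC : w = C (w.coeff 0) := eq_C_of_natDegree_eq_zero (by rw [← hDdef, hD0])
    have h1 := hweval α hαT
    have h2 := hweval β hβT
    rw [hwC, eval_C] at h1 h2
    rw [← h1, ← h2]



end UniAux

section MvAux
open MvPolynomial

theorem coeff_aeval_X {F : Type*} [CommRing F] {n : ℕ} (a : Fin n) (p : Polynomial F)
    (u : Fin n →₀ ℕ) :
    MvPolynomial.coeff u (Polynomial.aeval (MvPolynomial.X a : MvPolynomial (Fin n) F) p)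
      = if u = Finsupp.single a (u a) then p.coeff (u a) else 0 := by
  classical
  rw [Polynomial.aeval_def, Polynomial.eval₂_eq_sum, Polynomial.sum_def]
  rw [MvPolynomial.coeff_sum]
  have hterm : ∀ e ∈ p.support,
      MvPolynomial.coeff u (algebraMap F (MvPolynomial (Fin n) F) (p.coeff e) * X a ^ e)
        = if Finsupp.single a e = u then p.coeff e else 0 := by
    intro e _
    rw [MvPolynomial.algebraMap_eq, MvPolynomial.coeff_C_mul, MvPolynomial.coeff_X_pow]
    split <;> simp
  rw [Finset.sum_congr rfl hterm]
  by_cases h : u = Finsupp.single a (u a)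
  · rw [if_pos h]
    have hiff : ∀ e : ℕ, (Finsupp.single a e = u) ↔ (e = u a) := by
      intro e
      constructor
      · intro he
        have := congrArg (fun f : Fin n →₀ ℕ => f a) he
        simpa using this
      · intro he
        rw [he, ← h]
    simp_rw [hiff]
    rw [Finset.sum_ite_eq' p.support (u a) (fun e => p.coeff e)]
    split
    · rfl
    · exact (Polynomial.notMem_support_iff.1 (by assumption)).symm
  · rw [if_neg h]
    apply Finset.sum_eq_zero
    intro e _
    rw [if_neg]
    intro he
    apply h
    rw [← he]
    have h2 : e = u a := by
      have := congrArg (fun f : Fin n →₀ ℕ => f a) he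
      simpa using this
    rw [h2]
    simp

theorem coeff_prod_aeval {F : Type*} [CommRing F] {n : ℕ} (s : Finset (Fin n))
    (p : Fin n → Polynomial F) (d : Fin n →₀ ℕ) :
    ((∀ j, j ∉ s → d j = 0) →
      MvPolynomial.coeff d (∏ i ∈ s, Polynomial.aeval (MvPolynomial.X i : MvPolynomial (Fin n) F) (p i))
        = ∏ i ∈ s, (p i).coeff (d i)) ∧
    (∀ j₀, j₀ ∉ s → d j₀ ≠ 0 →
      MvPolynomial.coeff d (∏ i ∈ s, Polynomial.aeval (MvPolynomial.X i : MvPolynomial (Fin n) F) (p i)) = 0) := by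
  classical
  induction s using Finset.induction_on generalizing d with
  | empty =>
    constructor
    · intro hd
      have : d = 0 := Finsupp.ext fun j => hd j (Finset.notMem_empty j)
      simp [this]
    · intro j₀ _ hj₀
      have hd : d ≠ 0 := fun h => hj₀ (by rw [h]; rfl)
      rw [Finset.prod_empty, MvPolynomial.coeff_one, if_neg (fun h => hd h.symm)]
  | @insert a s ha ih =>
    rw [Finset.prod_insert ha]
    set A := Polynomial.aeval (MvPolynomial.X a : MvPolynomial (Fin n) F) (p a) with hA
    set B := ∏ i ∈ s, Polynomial.aeval (MvPolynomial.X i : MvPolynomial (Fin n) F) (p i) with hB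
    have hcm : MvPolynomial.coeff d (A * B)
        = ∑ x ∈ Finset.HasAntidiagonal.antidiagonal d, MvPolynomial.coeff x.1 A * MvPolynomial.coeff x.2 B :=
      MvPolynomial.coeff_mul A B d
    constructor
    · intro hd
      set u₀ : Fin n →₀ ℕ := Finsupp.single a (d a) with hu₀
      set v₀ : Fin n →₀ ℕ := d - u₀ with hv₀
      have hv₀app : ∀ j, v₀ j = if j = a then 0 else d j := by
        intro j
        rw [hv₀, Finsupp.tsub_apply, hu₀, Finsupp.single_apply]
        by_cases h : j = a
        · subst h; simp
        · rw [if_neg (fun hh => h hh.symm), if_neg h]; omega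
      have hmem : (u₀, v₀) ∈ Finset.HasAntidiagonal.antidiagonal d := by
        rw [Finset.HasAntidiagonal.mem_antidiagonal]
        ext j
        rw [Finsupp.add_apply, hv₀app j, hu₀, Finsupp.single_apply]
        by_cases h : j = a
        · subst h; simp
        · rw [if_neg (fun hh => h hh.symm), if_neg h]; omega
      rw [hcm]
      rw [Finset.sum_eq_single (u₀, v₀)]
      · have hcu : MvPolynomial.coeff u₀ A = (p a).coeff (d a) := by
          rw [hA, coeff_aeval_X, if_pos (by rw [hu₀]; simp)]
          rw [hu₀]; simp
        have hcv : MvPolynomial.coeff v₀ B = ∏ i ∈ s, (p i).coeff (d i) := by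
          rw [hB, (ih v₀).1 (by
            intro j hj
            rw [hv₀app]
            split
            · rfl
            · next h => exact hd j (by
                intro hmem
                rcases Finset.mem_insert.1 hmem with h1 | h1
                · exact h h1
                · exact hj h1))]
          apply Finset.prod_congr rfl
          intro i hi
          rw [hv₀app, if_neg (fun (h : i = a) => ha (h ▸ hi))]
        rw [hcu, hcv, Finset.prod_insert ha]
      · intro x hx hxne
        rcases x with ⟨u, v⟩
        rw [Finset.HasAntidiagonal.mem_antidiagonal] at hx
        by_contra hterm
        have hcu : MvPolynomial.coeff u A ≠ 0 := fun h => hterm (by rw [h, zero_mul])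
        have hcv : MvPolynomial.coeff v B ≠ 0 := fun h => hterm (by rw [h, mul_zero])
        have hu : u = Finsupp.single a (u a) := by
          by_contra h
          rw [hA, coeff_aeval_X, if_neg h] at hcu
          exact hcu rfl
        have hv : ∀ j, j ∉ s → v j = 0 := by
          intro j hj
          by_contra hvj
          exact hcv ((ih v).2 j hj hvj)
        have hva : v a = 0 := hv a ha
        have hua : u a = d a := by
          have := congrArg (fun f : Fin n →₀ ℕ => f a) hx
          simpa [hva] using this
        apply hxne
        have huu : u = u₀ := by rw [hu, hua]
        have hvv : v = v₀ := by
          ext j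
          rw [hv₀app]
          split
          · next h => rw [h]; exact hva
          · next h =>
            have := congrArg (fun f : Fin n →₀ ℕ => f j) hx
            simp only [Finsupp.add_apply] at this
            have huj : u j = 0 := by rw [hu, Finsupp.single_apply, if_neg (fun hh => h hh.symm)]
            omega
        rw [huu, hvv]
      · intro habs
        exact absurd hmem habs
    · intro j₀ hj₀ hdj₀
      rw [hcm]
      apply Finset.sum_eq_zero
      intro x hx
      rcases x with ⟨u, v⟩
      rw [Finset.HasAntidiagonal.mem_antidiagonal] at hx
      by_contra hterm
      have hcu : MvPolynomial.coeff u A ≠ 0 := fun h => hterm (by rw [h, zero_mul])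
      have hcv : MvPolynomial.coeff v B ≠ 0 := fun h => hterm (by rw [h, mul_zero])
      have hu : u = Finsupp.single a (u a) := by
        by_contra h
        rw [hA, coeff_aeval_X, if_neg h] at hcu
        exact hcu rfl
      have hja : j₀ ≠ a := fun h => hj₀ (by rw [h]; exact Finset.mem_insert_self a s)
      have hjs : j₀ ∉ s := fun h => hj₀ (Finset.mem_insert_of_mem h)
      have hvj : v j₀ = 0 := by
        by_contra hvj
        exact hcv ((ih v).2 j₀ hjs hvj)
      have huj : u j₀ = 0 := by rw [hu, Finsupp.single_apply, if_neg (fun h => hja h.symm)]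
      have := congrArg (fun f : Fin n →₀ ℕ => f j₀) hx
      simp only [Finsupp.add_apply] at this
      omega

end MvAux

theorem complements_in_explicit_cosets_of_shifted_support_avoids_U
    {F : Type*} [Field F] [Fintype F] [DecidableEq F] {q n : ℕ}
    (hq : Fintype.card F = q) (hn : 0 < n)
    (S : Fin n → Finset F) (hS0 : ∀ i, (0 : F) ∉ S i)
    (hScard : ∀ i, 0 < (S i).card ∧ (S i).card < q - 1)
    (hnotall : ¬ ∀ i, (S i).card = q - 2)
    (T : Fin n → Finset F) (hT : ∀ i, T i = Finset.univ.filter (· ≠ (0 : F)) \ S i)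
    (t : Fin n → ℕ) (ht : ∀ i, t i = (T i).card)
    (m : ℕ) (hm : m = ∏ i, t i)
    (P : MvPolynomial (Fin n) F)
    (hP : P = ∏ i, ∏ x ∈ S i, (MvPolynomial.X i - MvPolynomial.C x))
    (k : Fin n →₀ ℕ) (hk : ∀ i, 0 < k i ∧ k i < q - 1)
    (hdisj : ∀ e ∈ (reduceMod q (MvPolynomial.monomial k (1 : F) * P)).support,
      ¬ inU q (m - 1) e) :
    ∀ i, ({β : Fˣ | β ^ (k i) = 1} ≠ Set.univ) ∧
      ∀ γ : Fˣ, (γ : F) ∈ T i → ∀ x : Fˣ, (x : F) ∈ T i →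
        ∃ h : Fˣ, h ^ (k i) = 1 ∧ x = γ * h := by
  have hq2 : 1 < q := hq ▸ Fintype.one_lt_card
  have huni := fun i => uni_key hq (S i) (hS0 i) (hScard i).2 (hk i).1
  choose D jj hD hjsupp hjmod hjuniq hcoset using huni
  set p : Fin n → Polynomial F :=
    fun i => Polynomial.X ^ (k i) * ∏ x ∈ S i, (Polynomial.X - Polynomial.C x) with hp
  set Q := MvPolynomial.monomial k (1 : F) * P with hQ
  have hQprod : Q = ∏ i, Polynomial.aeval (MvPolynomial.X i : MvPolynomial (Fin n) F) (p i) := by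
    rw [hQ, hP]
    have h1 : (MvPolynomial.monomial k (1 : F))
        = ∏ i, (MvPolynomial.X i : MvPolynomial (Fin n) F) ^ (k i) := by
      rw [MvPolynomial.monomial_eq, map_one, one_mul]
      rw [Finsupp.prod_fintype _ _ (fun i => pow_zero _)]
    rw [h1, ← Finset.prod_mul_distrib]
    apply Finset.prod_congr rfl
    intro i _
    rw [hp]
    rw [map_mul, map_pow, Polynomial.aeval_X, map_prod]
    congr 1
    apply Finset.prod_congr rfl
    intro x _
    rw [map_sub, Polynomial.aeval_X, Polynomial.aeval_C, MvPolynomial.algebraMap_eq]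
  have hQcoeff : ∀ d : Fin n →₀ ℕ, MvPolynomial.coeff d Q = ∏ i, (p i).coeff (d i) := by
    intro d
    rw [hQprod]
    exact (coeff_prod_aeval Finset.univ p d).1 (fun j hj => absurd (Finset.mem_univ j) hj)
  set dstar : Fin n →₀ ℕ := Finsupp.equivFunOnFinite.symm jj with hdstar
  have hdapp : ∀ i, dstar i = jj i := fun i => rfl
  have hdQ : MvPolynomial.coeff dstar Q ≠ 0 := by
    rw [hQcoeff]
    apply Finset.prod_ne_zero_iff.2
    intro i _
    rw [hdapp]
    exact Polynomial.mem_support_iff.1 (hjsupp i)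
  set E := reduceExp q dstar with hE
  have hEapp : ∀ i, E i = (S i).card + D i := by
    intro i
    rw [hE, reduceExp, Finsupp.mapRange_apply, hdapp, hjmod]
  have hEsupp : E ∈ (reduceMod q Q).support := by
    rw [MvPolynomial.mem_support_iff]
    have hcoe : MvPolynomial.coeff E (reduceMod q Q) = MvPolynomial.coeff dstar Q := by
      rw [reduceMod, MvPolynomial.coeff_sum]
      rw [Finset.sum_eq_single dstar]
      · rw [MvPolynomial.coeff_monomial, if_pos hE.symm]
      · intro e hesupp hene
        rw [MvPolynomial.coeff_monomial]
        apply if_neg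
        intro habs
        apply hene
        have hesupp' : ∀ i, (e i) ∈ (p i).support := by
          intro i
          have h2 := MvPolynomial.mem_support_iff.1 hesupp
          rw [hQcoeff] at h2
          exact Polynomial.mem_support_iff.2 (Finset.prod_ne_zero_iff.1 h2 i (Finset.mem_univ i))
        ext i
        have hmod : (e i) % (q - 1) = (S i).card + D i := by
          have := congrArg (fun f : Fin n →₀ ℕ => f i) habs
          simp only [reduceExp, Finsupp.mapRange_apply] at this
          rw [this, hEapp i]
        rw [hjuniq i (e i) (hesupp' i) hmod, hdapp]
      · intro habs
        exact absurd (MvPolynomial.mem_support_iff.2 hdQ) habs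
    rw [hcoe]
    exact hdQ
  have hnotU := hdisj E hEsupp
  have hSsub : ∀ i, S i ⊆ Finset.univ.filter (· ≠ (0 : F)) := by
    intro i x hx
    simp only [Finset.mem_filter, Finset.mem_univ, true_and]
    rintro rfl
    exact hS0 i hx
  have hTcard : ∀ i, (T i).card = (q - 1) - (S i).card := by
    intro i
    rw [hT i, Finset.card_sdiff_of_subset (hSsub i), Finset.filter_ne',
      Finset.card_erase_of_mem (Finset.mem_univ _), Finset.card_univ, hq]
  have htval : ∀ i, t i = (q - 1) - (S i).card := fun i => by rw [ht i, hTcard i]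
  have htpos : ∀ i, 0 < t i := by
    intro i
    have := (hScard i).2
    rw [htval i]
    omega
  have hmpos : 0 < m := hm ▸ Finset.prod_pos (fun i _ => htpos i)
  have hDlt : ∀ i, D i < t i := by
    intro i
    have h1 := hD i
    rw [← hT i] at h1
    rw [ht i]
    exact h1
  have hfac : ∀ i, q - 1 - E i = t i - D i := by
    intro i
    have h1 := hDlt i
    have h2 := htval i
    rw [hEapp i]
    omega
  have hEineq : m ≤ ∏ s : Fin n, (q - 1 - E s) := by
    by_contra hlt
    push_neg at hlt
    apply hnotU
    constructor
    · intro i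
      have h1 := hDlt i
      have h2 := htval i
      have h3 := (hScard i).2
      rw [hEapp i]
      omega
    · omega
  have hDzero : ∀ i, D i = 0 := by
    by_contra hcon
    push_neg at hcon
    obtain ⟨i₀, hi₀⟩ := hcon
    have hlt : ∏ s : Fin n, (q - 1 - E s) < m := by
      rw [hm]
      apply Finset.prod_lt_prod
      · intro i _
        rw [hfac i]
        have := hDlt i
        omega
      · intro i _
        rw [hfac i]
        omega
      · refine ⟨i₀, Finset.mem_univ _, ?_⟩
        rw [hfac i₀]
        have := hDlt i₀
        omega
    omega
  intro i
  constructor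
  · intro huniv
    obtain ⟨g, hg⟩ := IsCyclic.exists_generator (α := Fˣ)
    have hgk : g ^ (k i) = 1 := by
      have hmem : g ∈ {β : Fˣ | β ^ (k i) = 1} := by rw [huniv]; trivial
      exact hmem
    have hord : orderOf g = Nat.card Fˣ := orderOf_eq_card_of_forall_mem_zpowers hg
    rw [Nat.card_eq_fintype_card, Fintype.card_units, hq] at hord
    have hdvd := orderOf_dvd_of_pow_eq_one hgk
    rw [hord] at hdvd
    have h1 := Nat.le_of_dvd (hk i).1 hdvd
    have h2 := (hk i).2
    omega
  · intro γ hγ x hx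
    rw [hT i] at hγ hx
    have hpow : (γ : F) ^ (k i) = (x : F) ^ (k i) := hcoset i (hDzero i) _ hγ _ hx
    refine ⟨γ⁻¹ * x, ?_, ?_⟩
    · apply Units.ext
      push_cast
      rw [mul_pow, inv_pow, hpow]
      exact inv_mul_cancel₀ (pow_ne_zero _ x.ne_zero)
    · rw [← mul_assoc, mul_inv_cancel, one_mul]
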